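/- arXiv:cs/0412104 — 2 statements merged into one kernel-verified Lean document; each statement's English description precedes it below -/
import Mathlib

section
/- If b* maximizes gains from trade over all bundles (b* ∈ B*) and (b', p') is any deal with u_c(b, p) < u_c(b', p') (the customer strictly improves), then u_s(b, p) > u_s(b', p') (the seller is strictly worse off), for any price p. The symmetric statement holds with customer and seller interchanged. -/
/-- If b ∈ B* and the customer strictly improves moving from (b,p) to
(b',p'), then the seller is strictly worse off; and symmetrically. -/
theorem stmt_1 {α : Type*} (B : Finset α) (vc vs : α → ℝ) (gc gs : ℝ → ℝ)
    (hgc : StrictMono gc) (hgs : StrictMono gs)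
    (b b' : α) (p p' : ℝ)
    (hb : b ∈ B) (hb' : b' ∈ B)
    (hmax : ∀ b'' ∈ B, vc b'' - vs b'' ≤ vc b - vs b) :
    (gc (vc b - p) < gc (vc b' - p') → gs (p - vs b) > gs (p' - vs b')) ∧
    (gs (p - vs b) < gs (p' - vs b') → gc (vc b - p) > gc (vc b' - p')) := by
  have h := hmax b' hb'
  constructor
  · intro h1
    have := hgc.lt_iff_lt.mp h1
    exact hgs (by linarith)
  · intro h1
    have := hgs.lt_iff_lt.mp h1
    exact hgc (by linarith)
end

section
/- A deal (b, p) with b ∈ B and p ∈ ℝ is Pareto efficient if and only if b ∈ B*, i.e., if and only if b maximizes the gains from trade v_c(b) - v_s(b) over all bundles in B. -/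
/-- A deal (b, p) with b ∈ B is Pareto efficient iff b maximizes the
gains from trade v_c - v_s over B. -/
theorem stmt_2 {α : Type*} (B : Finset α) (hB : B.Nonempty) (vc vs : α → ℝ)
    (gc gs : ℝ → ℝ) (hgc : StrictMono gc) (hgs : StrictMono gs)
    (b : α) (p : ℝ) (hb : b ∈ B) :
    (¬ ∃ b' ∈ B, ∃ p' : ℝ,
        gc (vc b - p) ≤ gc (vc b' - p') ∧ gs (p - vs b) ≤ gs (p' - vs b') ∧
        (gc (vc b - p) < gc (vc b' - p') ∨ gs (p - vs b) < gs (p' - vs b')))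
      ↔ (∀ b' ∈ B, vc b' - vs b' ≤ vc b - vs b) := by
  simp only [hgc.le_iff_le, hgs.le_iff_le, hgc.lt_iff_lt, hgs.lt_iff_lt]
  constructor
  · intro h b' hb'
    by_contra hlt
    push_neg at hlt
    apply h
    refine ⟨b', hb', p + vs b' - vs b + (vc b' - vs b' - (vc b - vs b)) / 2, ?_, ?_, ?_⟩
    · linarith
    · linarith
    · left; linarith
  · rintro h ⟨b', hb', p', h1, h2, h3⟩
    have := h b' hb'
    rcases h3 with h3 | h3 <;> linarith
end
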